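/- Let B_w be an invertible bilateral weighted backward shift on ℓp(ℤ) (1 ≤ p < ∞) or c0(ℤ), with weights w bounded and bounded away from zero. If B_w has a dense set of periodic points, then B_w has the shadowing property if and only if B_w has the periodic shadowing property. -/

import Mathlib

open Finset

/-- `ℓᵖ(ℤ)`. -/
abbrev LpZ (p : ENNReal) := lp (fun _ : ℤ => ℝ) p

/-- `c₀(ℤ)`. -/
abbrev C0Z := ZeroAtInftyContinuousMap ℤ ℝ

section Defs

variable {X : Type*} [NormedAddCommGroup X] [NormedSpace ℝ X]

/-- `o : ℤ → X` is a full orbit of `T`. -/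
def IsOrbit (T : X ≃L[ℝ] X) (o : ℤ → X) : Prop := ∀ j : ℤ, o (j + 1) = T (o j)

/-- `(x_j)_{j ∈ ℤ}` is a `δ`-pseudotrajectory of `T`. -/
def IsPT (T : X ≃L[ℝ] X) (δ : ℝ) (x : ℤ → X) : Prop :=
  ∀ j : ℤ, ‖T (x j) - x (j + 1)‖ < δ

/-- A sequence `x : ℤ → X` is periodic. -/
def IsPer (x : ℤ → X) : Prop := ∃ p : ℕ, 1 ≤ p ∧ ∀ j : ℤ, x (j + p) = x j

/-- The shadowing property: every `δ`-pseudotrajectory is `ε`-shadowed by some full orbit. -/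
def SP (T : X ≃L[ℝ] X) : Prop :=
  ∀ ε > (0 : ℝ), ∃ δ > (0 : ℝ), ∀ x : ℤ → X, IsPT T δ x →
    ∃ o : ℤ → X, IsOrbit T o ∧ ∀ j : ℤ, ‖x j - o j‖ < ε

/-- The periodic shadowing property: every periodic `δ`-pseudotrajectory is `ε`-shadowed
by (the orbit of) a periodic point. -/
def PSP (T : X ≃L[ℝ] X) : Prop :=
  ∀ ε > (0 : ℝ), ∃ δ > (0 : ℝ), ∀ x : ℤ → X, IsPT T δ x → IsPer x →
    ∃ o : ℤ → X, IsOrbit T o ∧ IsPer o ∧ ∀ j : ℤ, ‖x j - o j‖ < ε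

/-- `x` is a chain recurrent point of `T`: for every `δ > 0` there is a finite
`δ`-chain from `x` to `x`. -/
def ChainRec (T : X →L[ℝ] X) (x : X) : Prop :=
  ∀ δ > (0 : ℝ), ∃ (k : ℕ) (c : ℕ → X), 1 ≤ k ∧ c 0 = x ∧ c k = x ∧
    ∀ j < k, ‖T (c j) - c (j + 1)‖ < δ

/-- `T` has no nontrivial periodic point. -/
def OnlyTrivialPer (T : X →L[ℝ] X) : Prop :=
  ∀ x : X, (∃ p : ℕ, 1 ≤ p ∧ (T ^ p) x = x) → x = 0

end Defs

/-! ### Auxiliary lemmas for the main theorem -/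

section Aux

variable {X : Type*} [NormedAddCommGroup X] [NormedSpace ℝ X]

set_option linter.unusedSectionVars false
set_option linter.unusedVariables false

namespace Stmt6Aux

/-- Successor of an integer mod: stay in the block. -/
theorem emod_succ_lt (u Q : ℤ) (hQ : 0 < Q) (h2 : u % Q + 1 < Q) : (u + 1) % Q = u % Q + 1 := by
  have h3 : 0 ≤ u % Q := Int.emod_nonneg u (by omega)
  conv_lhs => rw [← Int.mul_ediv_add_emod u Q]
  rw [add_assoc, add_comm, Int.add_mul_emod_self_left]
  exact Int.emod_eq_of_lt (by omega) (by omega)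

/-- Successor of an integer mod: wrap around. -/
theorem emod_succ_eq (u Q : ℤ) (h2 : u % Q + 1 = Q) : (u + 1) % Q = 0 := by
  conv_lhs => rw [← Int.mul_ediv_add_emod u Q]
  rw [add_assoc, h2, add_comm, Int.add_mul_emod_self_left, Int.emod_self]

theorem zpow_succ_apply (T : X ≃L[ℝ] X) (i : ℤ) (v : X) :
    (T ^ (i + 1)) v = T ((T ^ i) v) := by
  have h1 : T ^ (i + 1) = T * T ^ i := by rw [add_comm, zpow_add, zpow_one]
  rw [h1]; rfl

theorem pow_coe_apply (T : X ≃L[ℝ] X) (n : ℕ) :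
    ∀ v, (T ^ n) v = (((T : X →L[ℝ] X) ^ n)) v := by
  induction n with
  | zero => intro v; rfl
  | succ k ih =>
      intro v
      rw [pow_succ, pow_succ]
      exact ih (T v)

/-- transfer along a period. -/
theorem per_shift (g : ℤ → X) (Q : ℤ) (hg : ∀ j, g (j + Q) = g j) :
    ∀ (k : ℤ) (j : ℤ), g (j + Q * k) = g j := by
  intro k
  induction k using Int.induction_on with
  | zero => intro j; simp
  | succ n ih =>
      intro j
      have : j + Q * (n + 1) = (j + Q * n) + Q := by ring
      rw [this, hg, ih]
  | pred n ih =>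
      intro j
      have h1 : (j + Q * (-(n : ℤ) - 1)) + Q = j + Q * (-(n : ℤ)) := by ring
      have h2 := hg (j + Q * (-(n : ℤ) - 1))
      rw [h1] at h2
      rw [← h2, ih j]

/-- A `Q`-periodic function equals its value at the residue. -/
theorem per_transfer (g : ℤ → X) (Q : ℤ) (hQ : 0 < Q) (hg : ∀ j, g (j + Q) = g j) (j : ℤ) :
    g j = g (j % Q) := by
  conv_lhs => rw [← Int.mul_ediv_add_emod j Q]
  rw [add_comm]
  exact per_shift g Q hg (j / Q) (j % Q)

/-- The ℤ-indexed orbit of a periodic point: basic properties. -/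
theorem orbit_of_periodic (T : X ≃L[ℝ] X) (u : X) (q : ℕ) (hq : 1 ≤ q)
    (hu : (((T : X →L[ℝ] X)) ^ q) u = u) :
    ∃ O : ℤ → X, O 0 = u ∧ (∀ i, O (i + 1) = T (O i)) ∧
      ∃ M : ℝ, 0 ≤ M ∧ ∀ i, ‖O i‖ ≤ M := by
  refine ⟨fun i => (T ^ i) u, by show (T ^ (0:ℤ)) u = u; rw [zpow_zero]; rfl, fun i => zpow_succ_apply T i u, ?_⟩
  set O : ℤ → X := fun i => (T ^ i) u with hO
  have hper : ∀ i, O (i + (q : ℤ)) = O i := by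
    intro i
    show (T ^ (i + (q:ℤ))) u = (T ^ i) u
    rw [zpow_add, zpow_natCast]
    have : (T ^ q) u = u := by rw [pow_coe_apply T q u, hu]
    calc (T ^ i * T ^ q) u = (T ^ i) ((T ^ q) u) := rfl
      _ = (T ^ i) u := by rw [this]
  refine ⟨∑ i ∈ Finset.range q, ‖O (i : ℤ)‖, Finset.sum_nonneg fun _ _ => norm_nonneg _, ?_⟩
  intro i
  have h1 : O i = O (i % (q : ℤ)) := per_transfer O q (by exact_mod_cast hq) hper i
  have h2 : 0 ≤ i % (q : ℤ) := Int.emod_nonneg i (by positivity)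
  have h3 : i % (q : ℤ) < q := Int.emod_lt_of_pos i (by positivity)
  have h4 : O (i % (q : ℤ)) = O ((i % (q : ℤ)).toNat : ℤ) := by
    rw [Int.toNat_of_nonneg h2]
  rw [h1, h4]
  exact Finset.single_le_sum (f := fun n : ℕ => ‖O (n : ℤ)‖)
    (fun _ _ => norm_nonneg _) (Finset.mem_range.mpr (by omega))

/-- `min 1 ·` is 1-Lipschitz. -/
theorem min1_lip (u v : ℝ) : |min 1 u - min 1 v| ≤ |u - v| := by
  have key : ∀ a b : ℝ, min 1 a - min 1 b ≤ |a - b| := by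
    intro a b
    have h1 : a ≤ b + |a - b| := by linarith [le_abs_self (a - b)]
    have h2 : min 1 a ≤ min 1 (b + |a - b|) := min_le_min le_rfl h1
    have h3 : min 1 (b + |a - b|) ≤ min (1 + |a - b|) (b + |a - b|) :=
      min_le_min (by linarith [abs_nonneg (a - b)]) le_rfl
    rw [min_add_add_right] at h3
    linarith
  rw [abs_sub_le_iff]
  exact ⟨key u v, by have := key v u; rwa [abs_sub_comm] at this⟩

/-- Defect bound for a pseudotrajectory. -/
def DefLe (T : X ≃L[ℝ] X) (x : ℤ → X) (s : ℝ) : Prop :=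
  ∀ j : ℤ, ‖T (x j) - x (j + 1)‖ ≤ s

/-- Uniform (linearly scaled) form of the shadowing property. -/
theorem unif_of_SP {T : X ≃L[ℝ] X} (hSP : SP T) :
    ∃ K : ℝ, 1 ≤ K ∧ ∀ s > (0 : ℝ), ∀ x : ℤ → X, DefLe T x s →
      ∃ o : ℤ → X, IsOrbit T o ∧ ∀ j : ℤ, ‖x j - o j‖ ≤ K * s := by
  obtain ⟨δ0, hδ0, hsh⟩ := hSP 1 one_pos
  refine ⟨max 1 (2 / δ0), le_max_left _ _, ?_⟩
  intro s hs x hx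
  set lam : ℝ := δ0 / (2 * s) with hlam
  have hlampos : 0 < lam := by positivity
  have hPT : IsPT T δ0 (fun j => lam • x j) := by
    intro j
    have : T (lam • x j) - lam • x (j + 1) = lam • (T (x j) - x (j + 1)) := by
      rw [map_smul, smul_sub]
    rw [this, norm_smul, Real.norm_eq_abs, abs_of_pos hlampos]
    calc lam * ‖T (x j) - x (j + 1)‖ ≤ lam * s := by
          exact mul_le_mul_of_nonneg_left (hx j) hlampos.le
      _ = δ0 / 2 := by rw [hlam]; field_simp
      _ < δ0 := by linarith
  obtain ⟨o', ho', hcl⟩ := hsh _ hPT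
  refine ⟨fun j => lam⁻¹ • o' j, ?_, ?_⟩
  · intro j
    show lam⁻¹ • o' (j + 1) = T (lam⁻¹ • o' j)
    rw [ho' j, map_smul]
  · intro j
    have : x j - lam⁻¹ • o' j = lam⁻¹ • (lam • x j - o' j) := by
      rw [smul_sub, inv_smul_smul₀ hlampos.ne']
    rw [this, norm_smul, Real.norm_eq_abs, abs_of_pos (by positivity)]
    have h1 : ‖lam • x j - o' j‖ ≤ 1 := (hcl j).le
    calc lam⁻¹ * ‖lam • x j - o' j‖ ≤ lam⁻¹ * 1 := by
          exact mul_le_mul_of_nonneg_left h1 (by positivity)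
      _ = (2 / δ0) * s := by rw [hlam]; field_simp
      _ ≤ max 1 (2 / δ0) * s := by
          exact mul_le_mul_of_nonneg_right (le_max_right _ _) hs.le

/-- Uniform (linearly scaled) form of the periodic shadowing property. -/
theorem unif_of_PSP {T : X ≃L[ℝ] X} (hPSP : PSP T) :
    ∃ K : ℝ, 1 ≤ K ∧ ∀ s > (0 : ℝ), ∀ x : ℤ → X, DefLe T x s → IsPer x →
      ∃ o : ℤ → X, IsOrbit T o ∧ IsPer o ∧ ∀ j : ℤ, ‖x j - o j‖ ≤ K * s := by
  obtain ⟨δ0, hδ0, hsh⟩ := hPSP 1 one_pos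
  refine ⟨max 1 (2 / δ0), le_max_left _ _, ?_⟩
  intro s hs x hx hper
  set lam : ℝ := δ0 / (2 * s) with hlam
  have hlampos : 0 < lam := by positivity
  have hPT : IsPT T δ0 (fun j => lam • x j) := by
    intro j
    have : T (lam • x j) - lam • x (j + 1) = lam • (T (x j) - x (j + 1)) := by
      rw [map_smul, smul_sub]
    rw [this, norm_smul, Real.norm_eq_abs, abs_of_pos hlampos]
    calc lam * ‖T (x j) - x (j + 1)‖ ≤ lam * s := by
          exact mul_le_mul_of_nonneg_left (hx j) hlampos.le
      _ = δ0 / 2 := by rw [hlam]; field_simp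
      _ < δ0 := by linarith
  have hper' : IsPer (fun j => lam • x j) := by
    obtain ⟨p, hp1, hp2⟩ := hper
    exact ⟨p, hp1, fun j => by simp only [hp2 j]⟩
  obtain ⟨o', ho', hop, hcl⟩ := hsh _ hPT hper'
  refine ⟨fun j => lam⁻¹ • o' j, ?_, ?_, ?_⟩
  · intro j
    show lam⁻¹ • o' (j + 1) = T (lam⁻¹ • o' j)
    rw [ho' j, map_smul]
  · obtain ⟨p, hp1, hp2⟩ := hop
    exact ⟨p, hp1, fun j => by simp only [hp2 j]⟩
  · intro j
    have : x j - lam⁻¹ • o' j = lam⁻¹ • (lam • x j - o' j) := by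
      rw [smul_sub, inv_smul_smul₀ hlampos.ne']
    rw [this, norm_smul, Real.norm_eq_abs, abs_of_pos (by positivity)]
    have h1 : ‖lam • x j - o' j‖ ≤ 1 := (hcl j).le
    calc lam⁻¹ * ‖lam • x j - o' j‖ ≤ lam⁻¹ * 1 := by
          exact mul_le_mul_of_nonneg_left h1 (by positivity)
      _ = (2 / δ0) * s := by rw [hlam]; field_simp
      _ ≤ max 1 (2 / δ0) * s := by
          exact mul_le_mul_of_nonneg_right (le_max_right _ _) hs.le

/-- Iterative refinement: a one-step contraction of the defect yields exact shadowing. -/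
theorem iter_refine [CompleteSpace X] (T : X ≃L[ℝ] X) (K s : ℝ) (hK : 0 ≤ K) (hs : 0 < s)
    (C : (ℤ → X) → Prop)
    (hClim : ∀ (g : ℕ → ℤ → X) (y : ℤ → X), (∀ n, C (g n)) →
      (∀ j, Filter.Tendsto (fun n => g n j) Filter.atTop (nhds (y j))) → C y)
    (step : ∀ s' > (0:ℝ), ∀ x : ℤ → X, C x → DefLe T x s' →
      ∃ x' : ℤ → X, C x' ∧ DefLe T x' (s' / 2) ∧ ∀ j, ‖x j - x' j‖ ≤ K * s')
    (x : ℤ → X) (hx : C x) (hd : DefLe T x s) :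
    ∃ o : ℤ → X, IsOrbit T o ∧ C o ∧ ∀ j : ℤ, ‖x j - o j‖ ≤ 2 * K * s := by
  classical
  -- the step function
  set F : ℕ → (ℤ → X) → (ℤ → X) := fun n y =>
    if h : C y ∧ DefLe T y (s / 2 ^ n) then
      (step (s / 2 ^ n) (by positivity) y h.1 h.2).choose
    else y with hF
  set g : ℕ → ℤ → X := fun n => Nat.rec x F n with hg
  have hg0 : g 0 = x := rfl
  have hgs : ∀ n, g (n + 1) = F n (g n) := fun n => rfl
  have hinv : ∀ n, C (g n) ∧ DefLe T (g n) (s / 2 ^ n) := by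
    intro n
    induction n with
    | zero => exact ⟨hx, by rw [hg0, pow_zero, div_one]; exact hd⟩
    | succ k ih =>
        have hk := (step (s / 2 ^ k) (by positivity) (g k) ih.1 ih.2).choose_spec
        rw [hgs k]
        simp only [hF]
        rw [dif_pos ih]
        refine ⟨hk.1, ?_⟩
        have : s / 2 ^ k / 2 = s / 2 ^ (k + 1) := by
          rw [div_div]; ring_nf
        rw [← this]; exact hk.2.1
  have hstep : ∀ n j, ‖g n j - g (n + 1) j‖ ≤ K * (s / 2 ^ n) := by
    intro n j
    have hk := (step (s / 2 ^ n) (by positivity) (g n) (hinv n).1 (hinv n).2).choose_spec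
    have : g (n + 1) = (step (s / 2 ^ n) (by positivity) (g n) (hinv n).1 (hinv n).2).choose := by
      rw [hgs n]
      simp only [hF]
      rw [dif_pos (hinv n)]
    rw [this]
    exact hk.2.2 j
  -- convergence
  have hcau : ∀ j, CauchySeq (fun n => g n j) := by
    intro j
    apply cauchySeq_of_le_geometric (1 / 2) (K * s) (by norm_num)
    intro n
    rw [dist_eq_norm]
    calc ‖g n j - g (n + 1) j‖ ≤ K * (s / 2 ^ n) := hstep n j
      _ = K * s * (1 / 2) ^ n := by
          rw [div_pow, one_pow]; ring
  have hlim : ∀ j, ∃ l, Filter.Tendsto (fun n => g n j) Filter.atTop (nhds l) :=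
    fun j => cauchySeq_tendsto_of_complete (hcau j)
  choose o ho using hlim
  have hdist : ∀ j, ‖x j - o j‖ ≤ 2 * K * s := by
    intro j
    have h1 : dist (g 0 j) (o j) ≤ (K * s) / (1 - 1 / 2) := by
      apply dist_le_of_le_geometric_of_tendsto₀ (1 / 2) (K * s) (by norm_num) _ (ho j)
      intro n
      rw [dist_eq_norm]
      calc ‖g n j - g (n + 1) j‖ ≤ K * (s / 2 ^ n) := hstep n j
        _ = K * s * (1 / 2) ^ n := by rw [div_pow, one_pow]; ring
    rw [hg0] at h1
    rw [← dist_eq_norm]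
    calc dist (x j) (o j) ≤ (K * s) / (1 - 1/2) := h1
      _ = 2 * K * s := by ring
  refine ⟨o, ?_, hClim g o (fun n => (hinv n).1) ho, hdist⟩
  intro j
  -- o (j+1) = T (o j)
  have h1 : Filter.Tendsto (fun n => T (g n j)) Filter.atTop (nhds (T (o j))) :=
    ((T.continuous.tendsto (o j)).comp (ho j))
  have h2 : Filter.Tendsto (fun n => T (g n j) - g n (j + 1)) Filter.atTop (nhds 0) := by
    apply squeeze_zero_norm (fun n => (hinv n).2 j)
    have : Filter.Tendsto (fun n : ℕ => s * (1 / 2 : ℝ) ^ n) Filter.atTop (nhds (s * 0)) :=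
      (tendsto_pow_atTop_nhds_zero_of_lt_one (by norm_num) (by norm_num)).const_mul s
    simp only [mul_zero] at this
    convert this using 2 with n
    rw [div_pow, one_pow]; ring
  have h3 : Filter.Tendsto (fun n => g n (j + 1)) Filter.atTop (nhds (T (o j))) := by
    have := h1.sub h2
    simp only [sub_sub_cancel, sub_zero] at this
    exact this
  exact tendsto_nhds_unique (ho (j + 1)) h3

/-- One periodization step: from a `Q`-periodic pseudotrajectory, produce a `Q`-periodic
correction that halves the defect, using plain shadowing. -/
theorem stepA {T : X ≃L[ℝ] X} (K : ℝ) (hK : 1 ≤ K)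
    (hunif : ∀ s > (0:ℝ), ∀ x : ℤ → X, DefLe T x s →
      ∃ o : ℤ → X, IsOrbit T o ∧ ∀ j : ℤ, ‖x j - o j‖ ≤ K * s)
    (R : ℝ) (hR8 : 8 * K ≤ R) (Q : ℤ) (hQpos : 0 < Q) (hQR : R ≤ (Q : ℝ) - 1)
    (s : ℝ) (hs : 0 < s) (x : ℤ → X) (hper : ∀ j, x (j + Q) = x j) (hx : DefLe T x s) :
    ∃ x' : ℤ → X, (∀ j, x' (j + Q) = x' j) ∧ DefLe T x' (s / 2) ∧
      ∀ j : ℤ, ‖x j - x' j‖ ≤ K * s := by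
  have hRpos : (0:ℝ) < R := by linarith
  obtain ⟨o, horb, hcl⟩ := hunif s hs x hx
  set e : ℤ → X := fun j => x j - o j with hedef
  set z : ℤ → X := fun j => T (x j) - x (j + 1) with hzdef
  have hdef : ∀ j, T (e j) - e (j + 1) = z j := by
    intro j
    show T (x j - o j) - (x (j + 1) - o (j + 1)) = T (x j) - x (j + 1)
    rw [map_sub, horb j]
    abel
  have he : ∀ j, ‖e j‖ ≤ K * s := hcl
  have hz : ∀ j, z (j + Q) = z j := by
    intro j
    show T (x (j + Q)) - x (j + Q + 1) = T (x j) - x (j + 1)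
    rw [hper j, show j + Q + 1 = (j + 1) + Q by ring, hper (j + 1)]
  have hzr : ∀ j, z j = z (j % Q) := per_transfer z Q hQpos hz
  set ψ : ℤ → ℝ := fun r => min 1 ((r : ℝ) / R) with hψdef
  have hψ0 : ψ 0 = 0 := by simp [hψdef]
  have hψ01 : ∀ r : ℤ, 0 ≤ r → 0 ≤ ψ r ∧ ψ r ≤ 1 := by
    intro r hr
    constructor
    · apply le_min (by norm_num)
      positivity
    · exact min_le_left _ _
  have hψlip : ∀ r : ℤ, |ψ (r + 1) - ψ r| ≤ 1 / R := by
    intro r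
    have h1 := min1_lip (((r:ℤ) + 1 : ℤ) / R : ℝ) ((r : ℝ) / R)
    have h2 : |(((r:ℤ) + 1 : ℤ) : ℝ) / R - (r : ℝ) / R| = 1 / R := by
      push_cast
      rw [show ((r:ℝ) + 1) / R - (r:ℝ) / R = 1 / R by field_simp; ring]
      exact abs_of_pos (by positivity)
    calc |ψ (r + 1) - ψ r| = |min 1 ((((r:ℤ) + 1 : ℤ) : ℝ) / R) - min 1 ((r : ℝ) / R)| := by
          simp [hψdef]
      _ ≤ |(((r:ℤ) + 1 : ℤ) : ℝ) / R - (r : ℝ) / R| := by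
          have := min1_lip ((((r:ℤ) + 1 : ℤ) : ℝ) / R) ((r : ℝ) / R)
          exact this
      _ = 1 / R := h2
  set f : ℤ → X := fun j => (1 - ψ (j % Q)) • e (j % Q) + ψ (j % Q) • e (j % Q - Q) with hfdef
  have hfper : ∀ j, f (j + Q) = f j := by
    intro j
    simp only [hfdef]
    rw [show j + Q = j + Q * 1 by ring, Int.add_mul_emod_self_left]
  have hfbound : ∀ j, ‖f j‖ ≤ K * s := by
    intro j
    have hr0 : 0 ≤ j % Q := Int.emod_nonneg j (by omega)
    obtain ⟨ha, hb⟩ := hψ01 (j % Q) hr0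
    calc ‖f j‖ ≤ ‖(1 - ψ (j % Q)) • e (j % Q)‖ + ‖ψ (j % Q) • e (j % Q - Q)‖ := norm_add_le _ _
      _ = (1 - ψ (j % Q)) * ‖e (j % Q)‖ + ψ (j % Q) * ‖e (j % Q - Q)‖ := by
          rw [norm_smul, norm_smul, Real.norm_eq_abs, Real.norm_eq_abs,
            abs_of_nonneg (by linarith), abs_of_nonneg ha]
      _ ≤ (1 - ψ (j % Q)) * (K * s) + ψ (j % Q) * (K * s) := by
          have h1 := he (j % Q)
          have h2 := he (j % Q - Q)
          have hKs : (0:ℝ) ≤ K * s := by positivity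
          apply add_le_add
          · exact mul_le_mul_of_nonneg_left h1 (by linarith)
          · exact mul_le_mul_of_nonneg_left h2 ha
      _ = K * s := by ring
  refine ⟨fun j => x j - f j, ?_, ?_, ?_⟩
  · intro j
    simp only
    rw [hper j, hfper j]
  · intro j
    set r := j % Q with hrdef
    have hr0 : 0 ≤ r := Int.emod_nonneg j (by omega)
    have hrQ : r < Q := Int.emod_lt_of_pos j hQpos
    show ‖T (x j - f j) - (x (j + 1) - f (j + 1))‖ ≤ s / 2
    have hexp : T (x j - f j) - (x (j + 1) - f (j + 1)) =
        z j - (T (f j) - f (j + 1)) := by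
      rw [map_sub]
      show T (x j) - T (f j) - (x (j + 1) - f (j + 1)) = (T (x j) - x (j+1)) - (T (f j) - f (j + 1))
      abel
    rw [hexp]
    have hfj : f j = (1 - ψ r) • e r + ψ r • e (r - Q) := by
      simp only [hfdef, ← hrdef]
    rcases lt_or_eq_of_le (by omega : r + 1 ≤ Q) with hcase | hcase
    · -- no wrap
      have hj1 : (j + 1) % Q = r + 1 := emod_succ_lt j Q hQpos (by omega)
      have hfj1 : f (j + 1) = (1 - ψ (r + 1)) • e (r + 1) + ψ (r + 1) • e (r + 1 - Q) := by
        simp only [hfdef, hj1]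
      have hTe1 : T (e r) = z r + e (r + 1) := by
        rw [← hdef r]; abel
      have hTe2 : T (e (r - Q)) = z r + e (r + 1 - Q) := by
        have h1 := hdef (r - Q)
        have h2 : z (r - Q) = z r := by
          have := hz (r - Q)
          rw [show r - Q + Q = r by ring] at this
          exact this.symm
        rw [h2] at h1
        rw [← h1, show r - Q + 1 = r + 1 - Q by ring]
        abel
      have hTfj : T (f j) = (1 - ψ r) • (z r + e (r + 1)) + ψ r • (z r + e (r + 1 - Q)) := by
        rw [hfj, map_add, map_smul, map_smul, hTe1, hTe2]
      have hzj : z j = z r := hzr j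
      have habstract : ∀ (a b : ℝ) (Z A B : X),
          Z - ((1 - a) • (Z + A) + a • (Z + B) - ((1 - b) • A + b • B)) = (a - b) • (A - B) := by
        intro a b Z A B
        module
      have hkey : z j - (T (f j) - f (j + 1)) =
          (ψ r - ψ (r + 1)) • (e (r + 1) - e (r + 1 - Q)) := by
        rw [hTfj, hfj1, hzj]
        exact habstract (ψ r) (ψ (r + 1)) (z r) (e (r + 1)) (e (r + 1 - Q))
      rw [hkey, norm_smul, Real.norm_eq_abs]
      have h1 : |ψ r - ψ (r + 1)| ≤ 1 / R := by
        rw [abs_sub_comm]; exact hψlip r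
      have h2 : ‖e (r + 1) - e (r + 1 - Q)‖ ≤ 2 * (K * s) := by
        calc ‖e (r + 1) - e (r + 1 - Q)‖ ≤ ‖e (r + 1)‖ + ‖e (r + 1 - Q)‖ := norm_sub_le _ _
          _ ≤ K * s + K * s := add_le_add (he _) (he _)
          _ = 2 * (K * s) := by ring
      calc |ψ r - ψ (r + 1)| * ‖e (r + 1) - e (r + 1 - Q)‖
          ≤ (1 / R) * (2 * (K * s)) := by
            apply mul_le_mul h1 h2 (norm_nonneg _) (by positivity)
        _ ≤ (1 / (8 * K)) * (2 * (K * s)) := by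
            apply mul_le_mul_of_nonneg_right _ (by positivity)
            apply one_div_le_one_div_of_le (by positivity) hR8
        _ = s / 4 := by field_simp; ring
        _ ≤ s / 2 := by linarith
    · -- wrap around
      have hj1 : (j + 1) % Q = 0 := emod_succ_eq j Q (by omega)
      have hfj1 : f (j + 1) = e 0 := by
        simp only [hfdef, hj1, hψ0]
        rw [sub_zero, one_smul, zero_smul, add_zero]
      have hψr : ψ r = 1 := by
        have : (1:ℝ) ≤ (r : ℝ) / R := by
          rw [le_div_iff₀ hRpos, one_mul]
          have : (r : ℝ) = (Q : ℝ) - 1 := by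
            have : r = Q - 1 := by omega
            rw [this]; push_cast; ring
          linarith [this ▸ hQR]
        simp only [hψdef]
        exact min_eq_left this
      have hfjval : f j = e (-1) := by
        rw [hfj, hψr]
        rw [sub_self, zero_smul, one_smul, zero_add]
        congr 1
        omega
      have hzj : z j = z (-1) := by
        rw [hzr j, ← hrdef]
        have : r = -1 + Q := by omega
        rw [this, hz (-1)]
      rw [hfjval, hfj1]
      have : T (e (-1)) - e 0 = z (-1) := by
        have := hdef (-1)
        rwa [show (-1 : ℤ) + 1 = 0 by ring] at this
      rw [this, hzj, sub_self, norm_zero]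
      positivity
  · intro j
    show ‖x j - (x j - f j)‖ ≤ K * s
    rw [show x j - (x j - f j) = f j by abel]
    exact hfbound j

set_option maxHeartbeats 1000000 in
/-- Closing lemma: any window of a pseudotrajectory can be closed up into a periodic
pseudotrajectory with the same defect bound, using dense periodic points. -/
theorem closing {T : X ≃L[ℝ] X}
    (hD : Dense {v : X | ∃ q : ℕ, 1 ≤ q ∧ ((T : X →L[ℝ] X) ^ q) v = v})
    (s : ℝ) (hs : 0 < s) (x : ℤ → X) (hx : DefLe T x s) (a b : ℤ) (hab : a < b) :
    ∃ y : ℤ → X, IsPer y ∧ DefLe T y s ∧ ∀ j : ℤ, a ≤ j → j ≤ b → y j = x j := by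
  classical
  set CT : ℝ := max 1 ‖(T : X →L[ℝ] X)‖ with hCTdef
  have hCT1 : (1:ℝ) ≤ CT := le_max_left _ _
  have hCTpos : (0:ℝ) < CT := by linarith
  have hCTnorm : ∀ v : X, ‖T v‖ ≤ CT * ‖v‖ := by
    intro v
    calc ‖T v‖ ≤ ‖(T : X →L[ℝ] X)‖ * ‖v‖ := (T : X →L[ℝ] X).le_opNorm v
      _ ≤ CT * ‖v‖ := mul_le_mul_of_nonneg_right (le_max_right _ _) (norm_nonneg _)
  set η : ℝ := s / (2 * CT) with hηdef
  have hηpos : 0 < η := by positivity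
  have hCTη : CT * η = s / 2 := by
    rw [hηdef]; field_simp
  have hnear : ∀ (v : X), ∃ u : X,
      (∃ q : ℕ, 1 ≤ q ∧ ((T : X →L[ℝ] X) ^ q) u = u) ∧ ‖u - v‖ < η := by
    intro v
    obtain ⟨u, hu1, hu2⟩ := Metric.dense_iff.mp hD v η hηpos
    exact ⟨u, hu2, by rw [← dist_eq_norm]; exact Metric.mem_ball.mp hu1⟩
  -- periodic point near x b
  obtain ⟨q1, ⟨p1, hp1, hq1fix⟩, hq1close⟩ := hnear (x b)
  obtain ⟨O₁, hO₁0, hO₁succ, M₁, hM₁0, hM₁⟩ := orbit_of_periodic T q1 p1 hp1 hq1fix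
  -- periodic point near T⁻¹ (x a)
  obtain ⟨q2, ⟨p2, hp2, hq2fix⟩, hq2close⟩ := hnear (T.symm (x a))
  obtain ⟨O₂, hO₂0, hO₂succ, M₂, hM₂0, hM₂⟩ := orbit_of_periodic T q2 p2 hp2 hq2fix
  set θ₁ : ℝ := s / (2 * (M₁ + 1)) with hθ₁def
  have hθ₁pos : 0 < θ₁ := by positivity
  set θ₂ : ℝ := s / (2 * (M₂ + 1)) with hθ₂def
  have hθ₂pos : 0 < θ₂ := by positivity
  have hθ₁prod : θ₁ * (M₁ + 1) = s / 2 := by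
    rw [hθ₁def]; field_simp
  have hθ₂prod : θ₂ * (M₂ + 1) = s / 2 := by
    rw [hθ₂def]; field_simp
  set N₁ : ℕ := max 1 ⌈1 / θ₁⌉₊ with hN₁def
  set N₂ : ℕ := max 1 ⌈1 / θ₂⌉₊ with hN₂def
  have hN₁θ : 1 ≤ (N₁ : ℝ) * θ₁ := by
    have h1 : 1 / θ₁ ≤ (⌈1 / θ₁⌉₊ : ℝ) := Nat.le_ceil _
    have h2 : (⌈1 / θ₁⌉₊ : ℝ) ≤ (N₁ : ℝ) := by
      exact_mod_cast Nat.cast_le.mpr (le_max_right 1 _)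
    rw [div_le_iff₀ hθ₁pos] at h1
    nlinarith
  have hN₂θ : 1 ≤ (N₂ : ℝ) * θ₂ := by
    have h1 : 1 / θ₂ ≤ (⌈1 / θ₂⌉₊ : ℝ) := Nat.le_ceil _
    have h2 : (⌈1 / θ₂⌉₊ : ℝ) ≤ (N₂ : ℝ) := by
      exact_mod_cast Nat.cast_le.mpr (le_max_right 1 _)
    rw [div_le_iff₀ hθ₂pos] at h1
    nlinarith
  set A : ℤ := b - a with hAdef
  have hA1 : 1 ≤ A := by omega
  set d₁ : ℤ → X := fun i => (1 - min 1 ((i : ℝ) * θ₁)) • O₁ (i + 1) with hd₁def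
  set d₂ : ℤ → X := fun i => (1 - min 1 ((i : ℝ) * θ₂)) • O₂ (-i) with hd₂def
  set Qn : ℕ := (b - a).toNat + N₁ + N₂ + 3 with hQndef
  set QZ : ℤ := (Qn : ℤ) with hQZdef
  have hQZe : QZ = A + (N₁ : ℤ) + (N₂ : ℤ) + 3 := by
    rw [hQZdef, hQndef]
    push_cast [Int.toNat_of_nonneg (by omega : (0:ℤ) ≤ b - a)]
    omega
  have hQZpos : 0 < QZ := by omega
  set Ydef : ℤ → X := fun r =>
    if r ≤ A then x (a + r)
    else if r ≤ A + 1 + (N₁ : ℤ) then d₁ (r - A - 1)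
    else d₂ (QZ - 1 - r) with hYdef
  set y : ℤ → X := fun j => Ydef ((j - a) % QZ) with hydef
  have hagree : ∀ j : ℤ, a ≤ j → j ≤ b → y j = x j := by
    intro j hja hjb
    show Ydef ((j - a) % QZ) = x j
    have h1 : (j - a) % QZ = j - a := Int.emod_eq_of_lt (by omega) (by omega)
    rw [h1, hYdef]
    simp only
    rw [if_pos (by omega : j - a ≤ A)]
    congr 1
    ring
  refine ⟨y, ⟨Qn, by omega, ?_⟩, ?_, hagree⟩
  · -- periodicity
    intro j
    show Ydef ((j + (Qn:ℤ) - a) % QZ) = Ydef ((j - a) % QZ)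
    congr 1
    rw [show j + (Qn:ℤ) - a = (j - a) + QZ * 1 by rw [hQZdef]; ring,
      Int.add_mul_emod_self_left]
  · -- defect bound
    intro j
    set r : ℤ := (j - a) % QZ with hrdef
    have hr0 : 0 ≤ r := Int.emod_nonneg _ (by omega)
    have hrQ : r < QZ := Int.emod_lt_of_pos _ hQZpos
    have hyj : y j = Ydef r := rfl
    have hyj1 : y (j + 1) = Ydef ((j - a + 1) % QZ) := by
      show Ydef ((j + 1 - a) % QZ) = _
      congr 2
      ring
    -- helper for the min-Lipschitz estimates
    have hlips : ∀ (θ M : ℝ) (O : ℤ → X) (i : ℤ), 0 < θ → 0 ≤ M → (∀ k, ‖O k‖ ≤ M) →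
        θ * (M + 1) = s / 2 →
        ‖(min 1 (((i:ℝ) + 1) * θ) - min 1 ((i:ℝ) * θ)) • O (i + 2)‖ ≤ s / 2 := by
      intro θ M O i hθ hM hO hprod
      rw [norm_smul, Real.norm_eq_abs]
      have h1 : |min 1 (((i:ℝ) + 1) * θ) - min 1 ((i:ℝ) * θ)| ≤ θ := by
        calc |min 1 (((i:ℝ) + 1) * θ) - min 1 ((i:ℝ) * θ)|
            ≤ |((i:ℝ) + 1) * θ - (i:ℝ) * θ| := min1_lip _ _
          _ = θ := by rw [show ((i:ℝ) + 1) * θ - (i:ℝ) * θ = θ by ring, abs_of_pos hθ]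
      calc |min 1 (((i:ℝ)+1) * θ) - min 1 ((i:ℝ) * θ)| * ‖O (i + 2)‖ ≤ θ * M := by
            apply mul_le_mul h1 (hO _) (norm_nonneg _) hθ.le
        _ ≤ θ * (M + 1) := by nlinarith
        _ = s / 2 := hprod
    by_cases h1 : r ≤ A - 1
    · -- inside the window
      have hj1 : (j - a + 1) % QZ = r + 1 := emod_succ_lt _ _ hQZpos (by omega)
      rw [hyj, hyj1, hj1, hYdef]
      simp only
      rw [if_pos (by omega : r ≤ A), if_pos (by omega : r + 1 ≤ A)]
      have := hx (a + r)
      rw [show a + r + 1 = a + (r + 1) by ring] at this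
      exact this
    · by_cases h2 : r = A
      · -- jump to the periodic point q1
        have hj1 : (j - a + 1) % QZ = r + 1 := emod_succ_lt _ _ hQZpos (by omega)
        rw [hyj, hyj1, hj1, hYdef]
        simp only
        rw [if_pos (le_of_eq h2), if_neg (by omega), if_pos (by omega), h2]
        have hval : d₁ (A + 1 - A - 1) = T q1 := by
          rw [show A + 1 - A - 1 = (0:ℤ) by ring, hd₁def]
          simp only
          rw [show ((0:ℤ):ℝ) * θ₁ = 0 by push_cast; ring]
          rw [min_eq_right (by norm_num : (0:ℝ) ≤ 1), sub_zero, one_smul,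
            show (0:ℤ) + 1 = 0 + 1 by ring, hO₁succ 0, hO₁0]
        rw [hval, show a + A = b by omega]
        rw [← map_sub]
        calc ‖T (x b - q1)‖ ≤ CT * ‖x b - q1‖ := hCTnorm _
          _ ≤ CT * η := by
              apply mul_le_mul_of_nonneg_left _ hCTpos.le
              rw [norm_sub_rev]
              exact hq1close.le
          _ = s / 2 := hCTη
          _ ≤ s := by linarith
      · by_cases h3 : r ≤ A + (N₁ : ℤ)
        · -- descending along the orbit of q1
          have hj1 : (j - a + 1) % QZ = r + 1 := emod_succ_lt _ _ hQZpos (by omega)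
          rw [hyj, hyj1, hj1, hYdef]
          simp only
          rw [if_neg (by omega), if_pos (by omega), if_neg (by omega), if_pos (by omega)]
          set i : ℤ := r - A - 1 with hidef
          have hval1 : T (d₁ i) = (1 - min 1 ((i:ℝ) * θ₁)) • O₁ (i + 2) := by
            rw [hd₁def]
            simp only
            rw [map_smul, ← hO₁succ (i + 1), show i + 1 + 1 = i + 2 by ring]
          have hval2 : d₁ (r + 1 - A - 1) = (1 - min 1 (((i:ℝ) + 1) * θ₁)) • O₁ (i + 2) := by
            rw [show r + 1 - A - 1 = i + 1 by omega, hd₁def]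
            simp only
            rw [show ((i + 1 : ℤ) : ℝ) = (i:ℝ) + 1 by push_cast; ring,
              show i + 1 + 1 = i + 2 by ring]
          rw [hval1, hval2, ← sub_smul,
            show 1 - min 1 ((i:ℝ) * θ₁) - (1 - min 1 (((i:ℝ) + 1) * θ₁)) =
              min 1 (((i:ℝ) + 1) * θ₁) - min 1 ((i:ℝ) * θ₁) by ring]
          calc ‖(min 1 (((i:ℝ) + 1) * θ₁) - min 1 ((i:ℝ) * θ₁)) • O₁ (i + 2)‖ ≤ s / 2 :=
                hlips θ₁ M₁ O₁ i hθ₁pos hM₁0 hM₁ hθ₁prod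
            _ ≤ s := by linarith
        · by_cases h4 : r = A + 1 + (N₁ : ℤ)
          · -- bottom: both values vanish
            have hj1 : (j - a + 1) % QZ = r + 1 := emod_succ_lt _ _ hQZpos (by omega)
            rw [hyj, hyj1, hj1, hYdef]
            simp only
            rw [if_neg (by omega), if_pos (by omega), if_neg (by omega), if_neg (by omega)]
            have hval1 : d₁ (r - A - 1) = 0 := by
              rw [h4, show A + 1 + (N₁:ℤ) - A - 1 = (N₁:ℤ) by ring, hd₁def]
              simp only
              rw [show (((N₁:ℤ)):ℝ) * θ₁ = (N₁:ℝ) * θ₁ by push_cast; ring]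
              rw [min_eq_left hN₁θ, sub_self, zero_smul]
            have hval2 : d₂ (QZ - 1 - (r + 1)) = 0 := by
              rw [h4, show QZ - 1 - (A + 1 + (N₁:ℤ) + 1) = (N₂:ℤ) by omega, hd₂def]
              simp only
              rw [show (((N₂:ℤ)):ℝ) * θ₂ = (N₂:ℝ) * θ₂ by push_cast; ring]
              rw [min_eq_left hN₂θ, sub_self, zero_smul]
            rw [hval1, hval2, map_zero, sub_zero, norm_zero]
            linarith
          · by_cases h5 : r ≤ QZ - 2
            · -- ascending along the orbit of q2
              have hj1 : (j - a + 1) % QZ = r + 1 := emod_succ_lt _ _ hQZpos (by omega)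
              rw [hyj, hyj1, hj1, hYdef]
              simp only
              rw [if_neg (by omega), if_neg (by omega), if_neg (by omega), if_neg (by omega)]
              set i : ℤ := QZ - 2 - r with hidef
              have hval1 : T (d₂ (QZ - 1 - r)) = (1 - min 1 (((i:ℝ) + 1) * θ₂)) • O₂ (-i) := by
                rw [show QZ - 1 - r = i + 1 by omega, hd₂def]
                simp only
                rw [map_smul, show -(i + 1) = -i - 1 by ring]
                rw [show ((i + 1 : ℤ) : ℝ) = (i:ℝ) + 1 by push_cast; ring]
                congr 1
                rw [← hO₂succ (-i - 1), show -i - 1 + 1 = -i by ring]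
              have hval2 : d₂ (QZ - 1 - (r + 1)) = (1 - min 1 ((i:ℝ) * θ₂)) • O₂ (-i) := by
                rw [show QZ - 1 - (r + 1) = i by omega, hd₂def]
              rw [hval1, hval2, ← sub_smul,
                show 1 - min 1 (((i:ℝ) + 1) * θ₂) - (1 - min 1 ((i:ℝ) * θ₂)) =
                  -(min 1 (((i:ℝ) + 1) * θ₂) - min 1 ((i:ℝ) * θ₂)) by ring,
                neg_smul, norm_neg]
              have hOtrick : ∀ k : ℤ, ‖O₂ k‖ ≤ M₂ := hM₂
              have := hlips θ₂ M₂ (fun k => O₂ (k - (i + 2) + (-i))) i hθ₂pos hM₂0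
                (fun k => hOtrick _) hθ₂prod
              simp only [show i + 2 - (i + 2) + -i = -i by ring] at this
              calc ‖(min 1 (((i:ℝ) + 1) * θ₂) - min 1 ((i:ℝ) * θ₂)) • O₂ (-i)‖ ≤ s / 2 := this
                _ ≤ s := by linarith
            · -- wrap around: jump back to x a
              have h6 : r = QZ - 1 := by omega
              have hj1 : (j - a + 1) % QZ = 0 := emod_succ_eq _ _ (by omega)
              rw [hyj, hyj1, hj1, hYdef]
              simp only
              rw [if_neg (by omega), if_neg (by omega), if_pos (by omega)]
              have hval1 : d₂ (QZ - 1 - r) = q2 := by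
                rw [h6, show QZ - 1 - (QZ - 1) = (0:ℤ) by ring, hd₂def]
                simp only
                rw [show ((0:ℤ):ℝ) * θ₂ = 0 by push_cast; ring]
                rw [min_eq_right (by norm_num : (0:ℝ) ≤ 1), sub_zero, one_smul, neg_zero, hO₂0]
              rw [hval1, show a + (0:ℤ) = a by ring]
              rw [show x a = T (T.symm (x a)) from (T.apply_symm_apply (x a)).symm, ← map_sub]
              calc ‖T (q2 - T.symm (x a))‖ ≤ CT * ‖q2 - T.symm (x a)‖ := hCTnorm _
                _ ≤ CT * η := mul_le_mul_of_nonneg_left hq2close.le hCTpos.le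
                _ = s / 2 := hCTη
                _ ≤ s := by linarith

set_option maxHeartbeats 1000000 in
/-- One gluing step: from an arbitrary pseudotrajectory, produce a bounded correction that
halves the defect, using periodic shadowing and dense periodic points. -/
theorem stepB {T : X ≃L[ℝ] X} (K : ℝ) (hK : 1 ≤ K)
    (hunif : ∀ s > (0:ℝ), ∀ x : ℤ → X, DefLe T x s → IsPer x →
      ∃ o : ℤ → X, IsOrbit T o ∧ IsPer o ∧ ∀ j : ℤ, ‖x j - o j‖ ≤ K * s)
    (hD : Dense {v : X | ∃ q : ℕ, 1 ≤ q ∧ ((T : X →L[ℝ] X) ^ q) v = v})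
    (L : ℤ) (hLpos : 0 < L) (hL8 : 8 * K ≤ (L : ℝ))
    (s : ℝ) (hs : 0 < s) (x : ℤ → X) (hx : DefLe T x s) :
    ∃ x' : ℤ → X, DefLe T x' (s / 2) ∧ ∀ j : ℤ, ‖x j - x' j‖ ≤ K * s := by
  classical
  have hLR : (0:ℝ) < (L:ℝ) := by exact_mod_cast hLpos
  have hwin : ∀ k : ℤ, ∃ e : ℤ → X, (∀ j, ‖e j‖ ≤ K * s) ∧
      (∀ j, L * k - L ≤ j → j ≤ L * k + L - 1 →
        T (e j) - e (j + 1) = T (x j) - x (j + 1)) := by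
    intro k
    obtain ⟨y, hyper, hydef, hyagree⟩ := closing hD s hs x hx (L * k - L) (L * k + L) (by omega)
    obtain ⟨o, horb, hoper, hocl⟩ := hunif s hs y hydef hyper
    refine ⟨fun j => y j - o j, hocl, ?_⟩
    intro j hj1 hj2
    have h1 : y j = x j := hyagree j (by omega) (by omega)
    have h2 : y (j + 1) = x (j + 1) := hyagree (j + 1) (by omega) (by omega)
    show T (y j - o j) - (y (j + 1) - o (j + 1)) = _
    rw [map_sub, horb j, h1, h2]
    abel
  choose E hE1 hE2 using hwin
  set e : ℤ → X := fun j =>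
    (1 - ((j % L : ℤ) : ℝ) / L) • E (j / L) j + (((j % L : ℤ) : ℝ) / L) • E (j / L + 1) j
    with hedef
  have hebound : ∀ j, ‖e j‖ ≤ K * s := by
    intro j
    have hm0 : (0:ℤ) ≤ j % L := Int.emod_nonneg j (by omega)
    have hmL : j % L < L := Int.emod_lt_of_pos j hLpos
    have hu0 : (0:ℝ) ≤ ((j % L : ℤ) : ℝ) / L := by positivity
    have hu1 : ((j % L : ℤ) : ℝ) / L ≤ 1 := by
      rw [div_le_one hLR]
      exact_mod_cast hmL.le
    calc ‖e j‖ ≤ ‖(1 - ((j % L : ℤ) : ℝ) / L) • E (j / L) j‖ +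
          ‖(((j % L : ℤ) : ℝ) / L) • E (j / L + 1) j‖ := norm_add_le _ _
      _ = (1 - ((j % L : ℤ) : ℝ) / L) * ‖E (j / L) j‖ +
          (((j % L : ℤ) : ℝ) / L) * ‖E (j / L + 1) j‖ := by
          rw [norm_smul, norm_smul, Real.norm_eq_abs, Real.norm_eq_abs,
            abs_of_nonneg (by linarith), abs_of_nonneg hu0]
      _ ≤ (1 - ((j % L : ℤ) : ℝ) / L) * (K * s) + (((j % L : ℤ) : ℝ) / L) * (K * s) := by
          apply add_le_add
          · exact mul_le_mul_of_nonneg_left (hE1 _ _) (by linarith)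
          · exact mul_le_mul_of_nonneg_left (hE1 _ _) hu0
      _ = K * s := by ring
  refine ⟨fun j => x j - e j, ?_, ?_⟩
  · intro j
    show ‖T (x j - e j) - (x (j + 1) - e (j + 1))‖ ≤ s / 2
    set z : X := T (x j) - x (j + 1) with hzdef
    set k : ℤ := j / L with hkdef
    set m : ℤ := j % L with hmdef
    have hm0 : (0:ℤ) ≤ m := Int.emod_nonneg j (by omega)
    have hmL : m < L := Int.emod_lt_of_pos j hLpos
    have hjeq : j = L * k + m := by
      have h := Int.mul_ediv_add_emod j L
      rw [← hkdef, ← hmdef] at h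
      linarith
    set u : ℝ := ((m : ℤ) : ℝ) / L with hudef
    have hTEk : T (E k j) = z + E k (j + 1) := by
      have h := hE2 k j (by linarith) (by linarith)
      rw [hzdef, ← h]; abel
    have hTEk1 : T (E (k + 1) j) = z + E (k + 1) (j + 1) := by
      have hr : L * (k + 1) = L * k + L := by ring
      have hb1 : L * (k + 1) - L ≤ j := by linarith
      have hb2 : j ≤ L * (k + 1) + L - 1 := by linarith
      have h := hE2 (k + 1) j hb1 hb2
      rw [hzdef, ← h]; abel
    have hTe : T (e j) = (1 - u) • (z + E k (j + 1)) + u • (z + E (k + 1) (j + 1)) := by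
      rw [hedef]
      simp only
      rw [map_add, map_smul, map_smul, hTEk, hTEk1]
    have hexp : T (x j - e j) - (x (j + 1) - e (j + 1)) = z - (T (e j) - e (j + 1)) := by
      rw [map_sub]
      show T (x j) - T (e j) - (x (j + 1) - e (j + 1)) = (T (x j) - x (j+1)) - (T (e j) - e (j + 1))
      abel
    have habs : ∀ (v : ℝ) (Z A B : X),
        Z - ((1 - v) • (Z + A) + v • (Z + B) - ((1 - (v + 1 / (L:ℝ))) • A + (v + 1 / (L:ℝ)) • B))
          = (1 / (L:ℝ)) • B - (1 / (L:ℝ)) • A := by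
      intro v Z A B
      module
    have hfinal : T (x j - e j) - (x (j + 1) - e (j + 1)) =
        (1 / (L:ℝ)) • E (k + 1) (j + 1) - (1 / (L:ℝ)) • E k (j + 1) := by
      rw [hexp, hTe]
      rcases lt_or_eq_of_le (by omega : m + 1 ≤ L) with hcase | hcase
      · -- same block
        have hm1 : (j + 1) % L = m + 1 := emod_succ_lt j L hLpos (by omega)
        have hd1 : (j + 1) / L = k := by
          have h1 := Int.mul_ediv_add_emod (j + 1) L
          rw [hm1] at h1
          have h2 : L * ((j + 1) / L) = L * k := by linarith
          exact mul_left_cancel₀ (by omega : L ≠ 0) h2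
        have he1 : e (j + 1) = (1 - (u + 1 / (L:ℝ))) • E k (j + 1) +
            (u + 1 / (L:ℝ)) • E (k + 1) (j + 1) := by
          rw [hedef]
          simp only
          rw [hm1, hd1, hudef]
          congr 2
          · push_cast; field_simp
          · push_cast; field_simp
        rw [he1]
        exact habs u z (E k (j + 1)) (E (k + 1) (j + 1))
      · -- next block
        have hm1 : (j + 1) % L = 0 := emod_succ_eq j L (by omega)
        have hd1 : (j + 1) / L = k + 1 := by
          have h1 := Int.mul_ediv_add_emod (j + 1) L
          rw [hm1] at h1
          have hr : L * (k + 1) = L * k + L := by ring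
          have h2 : L * ((j + 1) / L) = L * (k + 1) := by linarith
          exact mul_left_cancel₀ (by omega : L ≠ 0) h2
        have hu1 : u + 1 / (L:ℝ) = 1 := by
          rw [hudef]
          have : (m:ℝ) = (L:ℝ) - 1 := by
            have : m = L - 1 := by omega
            rw [this]; push_cast; ring
          rw [this]; field_simp; ring
        have he1 : e (j + 1) = (1 - (u + 1 / (L:ℝ))) • E k (j + 1) +
            (u + 1 / (L:ℝ)) • E (k + 1) (j + 1) := by
          rw [hedef]
          simp only
          rw [hm1, hd1, hu1]
          norm_num
        rw [he1]
        exact habs u z (E k (j + 1)) (E (k + 1) (j + 1))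
    rw [hfinal, ← smul_sub]
    rw [norm_smul, Real.norm_eq_abs, abs_of_pos (by positivity : (0:ℝ) < 1 / (L:ℝ))]
    have hAB : ‖E (k + 1) (j + 1) - E k (j + 1)‖ ≤ 2 * (K * s) := by
      calc ‖E (k + 1) (j + 1) - E k (j + 1)‖ ≤ ‖E (k + 1) (j + 1)‖ + ‖E k (j + 1)‖ :=
            norm_sub_le _ _
        _ ≤ K * s + K * s := add_le_add (hE1 _ _) (hE1 _ _)
        _ = 2 * (K * s) := by ring
    calc (1 / (L:ℝ)) * ‖E (k + 1) (j + 1) - E k (j + 1)‖ ≤ (1 / (L:ℝ)) * (2 * (K * s)) :=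
          mul_le_mul_of_nonneg_left hAB (by positivity)
      _ ≤ (1 / (8 * K)) * (2 * (K * s)) := by
          apply mul_le_mul_of_nonneg_right _ (by positivity)
          exact one_div_le_one_div_of_le (by positivity) hL8
      _ = s / 4 := by field_simp; ring
      _ ≤ s / 2 := by linarith
  · intro j
    show ‖x j - (x j - e j)‖ ≤ K * s
    rw [show x j - (x j - e j) = e j by abel]
    exact hebound j

/-- Main abstract result: on a Banach space, for an invertible operator with a dense set of
periodic points, the shadowing property is equivalent to the periodic shadowing property. -/
theorem keyIff [CompleteSpace X] (T : X ≃L[ℝ] X)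
    (hD : Dense {v : X | ∃ q : ℕ, 1 ≤ q ∧ ((T : X →L[ℝ] X) ^ q) v = v}) : SP T ↔ PSP T := by
  constructor
  · -- SP → PSP
    intro hSP ε hε
    obtain ⟨K, hK1, hunif⟩ := unif_of_SP hSP
    have hKpos : (0:ℝ) < K := by linarith
    refine ⟨ε / (5 * K), by positivity, ?_⟩
    intro x hPT hPer
    obtain ⟨P, hP1, hPx⟩ := hPer
    set R : ℕ := ⌈8 * K⌉₊ with hRdef
    have hR8 : 8 * K ≤ (R : ℝ) := Nat.le_ceil _
    set Q : ℤ := (P : ℤ) * ((R : ℤ) + 1) with hQdef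
    have hPpos : (0:ℤ) < (P : ℤ) := by exact_mod_cast hP1
    have hQpos : 0 < Q := mul_pos hPpos (by positivity)
    have hQR : (R : ℝ) ≤ (Q : ℝ) - 1 := by
      have h1 : ((P:ℤ) : ℝ) ≥ 1 := by exact_mod_cast hP1
      have h2 : (Q : ℝ) = ((P:ℤ) : ℝ) * ((R : ℝ) + 1) := by
        rw [hQdef]; push_cast; ring
      nlinarith [Nat.cast_nonneg (α := ℝ) R]
    have hxQ : ∀ j, x (j + Q) = x j := by
      have key : ∀ (m : ℕ) (j : ℤ), x (j + (P : ℤ) * (m : ℤ)) = x j := by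
        intro m
        induction m with
        | zero => intro j; simp
        | succ n ih =>
            intro j
            have h1 : j + (P:ℤ) * (((n+1:ℕ)):ℤ) = (j + (P:ℤ) * (n:ℤ)) + (P:ℤ) := by
              push_cast; ring
            rw [h1, hPx, ih]
      intro j
      have := key (R + 1) j
      rw [hQdef]
      have h2 : (P : ℤ) * (((R+1:ℕ)):ℤ) = (P:ℤ) * ((R:ℤ) + 1) := by push_cast; ring
      rw [h2] at this
      exact this
    have hδpos : (0:ℝ) < ε / (5 * K) := by positivity
    obtain ⟨o, horb, hCo, hclose⟩ := iter_refine T K (ε / (5 * K)) hKpos.le hδpos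
      (fun y => ∀ j, y (j + Q) = y j)
      (by
        intro g y hg hy j
        have h1 : (fun n => g n (j + Q)) = (fun n => g n j) := by
          funext n; exact hg n j
        have h2 := hy (j + Q)
        rw [h1] at h2
        exact tendsto_nhds_unique h2 (hy j))
      (by
        intro s' hs' x' hC hdef
        obtain ⟨x'', hper'', hdef'', hcl''⟩ :=
          stepA K hK1 hunif (R:ℝ) hR8 Q hQpos hQR s' hs' x' hC hdef
        exact ⟨x'', hper'', hdef'', hcl''⟩)
      x hxQ (fun j => (hPT j).le)
    refine ⟨o, horb, ⟨Q.toNat, by omega, ?_⟩, ?_⟩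
    · intro j
      have h1 : ((Q.toNat : ℕ) : ℤ) = Q := Int.toNat_of_nonneg hQpos.le
      rw [h1]
      exact hCo j
    · intro j
      calc ‖x j - o j‖ ≤ 2 * K * (ε / (5 * K)) := hclose j
        _ = 2 * ε / 5 := by field_simp
        _ < ε := by linarith
  · -- PSP → SP
    intro hPSP ε hε
    obtain ⟨K, hK1, hunif⟩ := unif_of_PSP hPSP
    have hKpos : (0:ℝ) < K := by linarith
    refine ⟨ε / (5 * K), by positivity, ?_⟩
    intro x hPT
    set L : ℤ := ((⌈8 * K⌉₊ : ℕ) : ℤ) + 1 with hLdef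
    have hLpos : 0 < L := by positivity
    have hL8 : 8 * K ≤ (L : ℝ) := by
      have h1 : 8 * K ≤ ((⌈8 * K⌉₊ : ℕ) : ℝ) := Nat.le_ceil _
      have h2 : (L : ℝ) = ((⌈8 * K⌉₊ : ℕ) : ℝ) + 1 := by rw [hLdef]; push_cast; ring
      linarith
    have hδpos : (0:ℝ) < ε / (5 * K) := by positivity
    obtain ⟨o, horb, _, hclose⟩ := iter_refine T K (ε / (5 * K)) hKpos.le hδpos
      (fun _ => True) (fun _ _ _ _ => trivial)
      (by
        intro s' hs' x' _ hdef
        obtain ⟨x'', hdef'', hcl''⟩ := stepB K hK1 hunif hD L hLpos hL8 s' hs' x' hdef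
        exact ⟨x'', trivial, hdef'', hcl''⟩)
      x trivial (fun j => (hPT j).le)
    refine ⟨o, horb, ?_⟩
    intro j
    calc ‖x j - o j‖ ≤ 2 * K * (ε / (5 * K)) := hclose j
      _ = 2 * ε / 5 := by field_simp
      _ < ε := by linarith

end Stmt6Aux
end Aux

/-- For an invertible bilateral weighted backward shift on `ℓᵖ(ℤ)` (`1 ≤ p < ∞`) or
`c₀(ℤ)` with weights bounded and bounded away from zero and with a dense set of
periodic points, the shadowing property is equivalent to the periodic shadowing
property. -/
theorem stmt6 (w : ℤ → ℝ) (hbd : ∃ C : ℝ, ∀ n : ℤ, |w n| ≤ C)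
    (hbelow : ∃ c > (0 : ℝ), ∀ n : ℤ, c ≤ |w n|) :
    (∀ (p : ENNReal) [Fact (1 ≤ p)], p ≠ ⊤ →
      ∀ T : LpZ p ≃L[ℝ] LpZ p,
        (∀ (x : LpZ p) (n : ℤ), (T x) n = w (n + 1) * x (n + 1)) →
        Dense {x : LpZ p | ∃ q : ℕ, 1 ≤ q ∧ ((T : LpZ p →L[ℝ] LpZ p) ^ q) x = x} →
        (SP T ↔ PSP T)) ∧
    (∀ T : C0Z ≃L[ℝ] C0Z,
        (∀ (x : C0Z) (n : ℤ), (T x) n = w (n + 1) * x (n + 1)) →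
        Dense {x : C0Z | ∃ q : ℕ, 1 ≤ q ∧ ((T : C0Z →L[ℝ] C0Z) ^ q) x = x} →
        (SP T ↔ PSP T)) := by
  constructor
  · intro p _ hp T hT hdense
    exact Stmt6Aux.keyIff T hdense
  · intro T hT hdense
    exact Stmt6Aux.keyIff T hdense
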